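/- Let ρ be a density matrix on ℂ^d, let x and x' be orthonormal vectors in ℂ^d, and let a, b, c ≥ 0 be integers with N := 2a+b+c ≥ 1. Write p := ⟨x|ρ|x⟩, p' := ⟨x'|ρ|x'⟩, and w := ⟨x|ρ|x'⟩. Then Σ_{π∈S_N} tr[ ( (|x⟩⟨x'|)^{⊗a} ⊗ (|x'⟩⟨x|)^{⊗a} ⊗ (|x⟩⟨x|)^{⊗b} ⊗ (|x'⟩⟨x'|)^{⊗c} ) · ρ^{⊗N} · P_π ] = (b+a)!·(c+a)! · Σ_{ℓ=0}^{min(b+a, c+a)} C(b+a, ℓ)·C(c+a, ℓ) · |w|^{2ℓ} · p^{b+a−ℓ} · p'^{c+a−ℓ}, where C(n,ℓ) denotes the binomial coefficient. (These are the diagonal moments of the complex central 2×2 Wishart distribution.) -/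

import Mathlib

open MeasureTheory Matrix BigOperators Finset
open scoped ComplexOrder

noncomputable section

/-- The old Mathlib `Matrix.PosSemidef.sqrt` (removed from Mathlib), with its old definition. -/
def Matrix.PosSemidef.sqrt {n 𝕜 : Type*} [Fintype n] [DecidableEq n] [RCLike 𝕜]
    {A : Matrix n n 𝕜} (hA : A.PosSemidef) : Matrix n n 𝕜 :=
  (hA.1.eigenvectorUnitary : Matrix n n 𝕜) *
    diagonal (fun i => ((Real.sqrt (hA.1.eigenvalues i) : ℝ) : 𝕜)) *
    (star hA.1.eigenvectorUnitary : Matrix n n 𝕜)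

section Prelude

variable {n : Type*} [Fintype n] [DecidableEq n]

/-- The inner product `⟨u|A|v⟩ = Σᵢⱼ conj(uᵢ) Aᵢⱼ vⱼ`. -/
def braket (A : Matrix n n ℂ) (u v : n → ℂ) : ℂ :=
  ∑ i, ∑ j, (starRingEnd ℂ) (u i) * A i j * v j

/-- `μ` is the Haar measure on unit vectors: a probability measure supported on the
unit sphere that is invariant under every unitary. -/
def IsHaarUnit (μ : Measure (n → ℂ)) : Prop :=
  IsProbabilityMeasure μ ∧
  (∀ᵐ φ ∂μ, ∑ i, Complex.normSq (φ i) = 1) ∧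
  ∀ U ∈ Matrix.unitaryGroup n ℂ, Measure.map (fun φ => U.mulVec φ) μ = μ

/-- `r_φ = d ⟨φ|ρ|φ⟩`. -/
def rphi (ρ : Matrix n n ℂ) (φ : n → ℂ) : ℝ :=
  (Fintype.card n : ℝ) * (braket ρ φ φ).re

/-- The Scrooge (ρ-distorted) state `√(dρ) φ / √(r_φ)`. -/
def scroogeVec {ρ : Matrix n n ℂ} (hρ : ρ.PosSemidef) (φ : n → ℂ) : n → ℂ :=
  ((Real.sqrt (Fintype.card n) / Real.sqrt (rphi ρ φ) : ℝ) : ℂ) • hρ.sqrt.mulVec φ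

/-- Scrooge-ensemble expectation of a real function of the pure state:
`E_{ψ∼S_ρ}[f(ψ)] = ∫ dμ_Haar(φ) r_φ f(√(dρ)φ/√(r_φ))`. -/
def scroogeExp (μ : Measure (n → ℂ)) {ρ : Matrix n n ℂ} (hρ : ρ.PosSemidef)
    (f : (n → ℂ) → ℝ) : ℝ :=
  ∫ φ, rphi ρ φ * f (scroogeVec hρ φ) ∂μ

/-- The largest eigenvalue of a Hermitian matrix. -/
def maxEig {A : Matrix n n ℂ} (hA : A.IsHermitian) : ℝ := ⨆ i, hA.eigenvalues i

/-- Min-entropy `S_∞ = -log₂ ‖A‖_∞`. -/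
def Sinf {A : Matrix n n ℂ} (hA : A.IsHermitian) : ℝ := -Real.logb 2 (maxEig hA)

/-- The `k`-fold tensor (Kronecker) power of a matrix, on index type `Fin k → n`. -/
def tpow (A : Matrix n n ℂ) (k : ℕ) : Matrix (Fin k → n) (Fin k → n) ℂ :=
  fun x y => ∏ i, A (x i) (y i)

/-- Tensor product of a family of matrices, on index type `Fin k → n`. -/
def tpowFam {k : ℕ} (A : Fin k → Matrix n n ℂ) :
    Matrix (Fin k → n) (Fin k → n) ℂ :=
  fun x y => ∏ i, A i (x i) (y i)

/-- The operator `P_π` permuting tensor factors: `P_π (v₁⊗⋯⊗v_k) = v_{π⁻¹(1)}⊗⋯⊗v_{π⁻¹(k)}`. -/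
def permMat (n : Type*) [DecidableEq n] (k : ℕ) (π : Equiv.Perm (Fin k)) :
    Matrix (Fin k → n) (Fin k → n) ℂ :=
  fun x y => if (fun i => x (π i)) = y then 1 else 0

/-- Loewner order: `A ⪯ B` iff `B - A` is positive semidefinite. -/
def matLE {m : Type*} [Fintype m] (A B : Matrix m m ℂ) : Prop := (B - A).PosSemidef

/-- The trace norm `‖X‖₁ = tr √(XᴴX)`. -/
def traceNorm (X : Matrix n n ℂ) : ℝ :=
  ((Matrix.posSemidef_conjTranspose_mul_self X).sqrt.trace).re

/-- The operator (spectral) norm `‖X‖_∞ = √(max eig (XᴴX))`. -/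
def opNorm (X : Matrix n n ℂ) : ℝ :=
  Real.sqrt (maxEig (Matrix.posSemidef_conjTranspose_mul_self X).1)

/-- k-th moment of the Scrooge ensemble, `χ^{(k)}_{S_ρ} = E_{ψ∼S_ρ}[(|ψ⟩⟨ψ|)^{⊗k}]`,
computed entrywise. -/
def scroogeMoment (μ : Measure (n → ℂ)) {ρ : Matrix n n ℂ} (hρ : ρ.PosSemidef) (k : ℕ) :
    Matrix (Fin k → n) (Fin k → n) ℂ :=
  fun x y => ∫ φ, ((rphi ρ φ : ℝ) : ℂ) *
    ∏ i, (scroogeVec hρ φ (x i) * (starRingEnd ℂ) (scroogeVec hρ φ (y i))) ∂μ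

end Prelude

/-- The rank-one operator `|u⟩⟨v|`. -/
def rank1 {n : Type*} (u v : n → ℂ) : Matrix n n ℂ :=
  fun i j => u i * (starRingEnd ℂ) (v j)


section WishartAux

open Finset

variable {N : ℕ}

/-- helper permutation glued from two bijections -/
def wmGlue (T A : Finset (Fin N)) (σ : {i : Fin N // i ∈ T} ≃ {i : Fin N // i ∈ A})
    (τ : {i : Fin N // ¬ i ∈ T} ≃ {i : Fin N // ¬ i ∈ A}) : Equiv.Perm (Fin N) :=
  ((Equiv.sumCompl (· ∈ T)).symm.trans ((σ.sumCongr τ).trans (Equiv.sumCompl (· ∈ A))))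

lemma wmGlue_pos (T A : Finset (Fin N)) (σ τ) {i : Fin N} (hi : i ∈ T) :
    wmGlue T A σ τ i = ↑(σ ⟨i, hi⟩) := by
  simp [wmGlue, Equiv.sumCompl_symm_apply_of_pos (p := (· ∈ T)) hi]

lemma wmGlue_neg (T A : Finset (Fin N)) (σ τ) {i : Fin N} (hi : ¬ i ∈ T) :
    wmGlue T A σ τ i = ↑(τ ⟨i, hi⟩) := by
  simp [wmGlue, Equiv.sumCompl_symm_apply_of_neg (p := (· ∈ T)) hi]

lemma wm_mem_iff {T A : Finset (Fin N)} {π : Equiv.Perm (Fin N)} (hπ : T.image π = A)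
    (i : Fin N) : i ∈ T ↔ π i ∈ A := by
  subst hπ
  constructor
  · exact fun h => Finset.mem_image_of_mem π h
  · intro h
    rcases Finset.mem_image.mp h with ⟨j, hj, hje⟩
    rwa [← π.injective hje]

/-- the fiber of `π ↦ T.image π` over `A` -/
def wmFiberEquiv (T A : Finset (Fin N)) :
    {π : Equiv.Perm (Fin N) // T.image π = A} ≃
      (({i : Fin N // i ∈ T} ≃ {i : Fin N // i ∈ A}) ×
        ({i : Fin N // ¬ i ∈ T} ≃ {i : Fin N // ¬ i ∈ A})) where
  toFun := fun π =>
    (Equiv.subtypeEquiv π.1 (wm_mem_iff π.2),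
     Equiv.subtypeEquiv π.1 (fun i => not_iff_not.mpr (wm_mem_iff π.2 i)))
  invFun := fun στ => ⟨wmGlue T A στ.1 στ.2, by
    ext j
    simp only [Finset.mem_image]
    constructor
    · rintro ⟨i, hi, rfl⟩
      rw [wmGlue_pos T A _ _ hi]
      exact (στ.1 ⟨i, hi⟩).2
    · intro hj
      refine ⟨↑(στ.1.symm ⟨j, hj⟩), (στ.1.symm ⟨j, hj⟩).2, ?_⟩
      rw [wmGlue_pos T A _ _ (στ.1.symm ⟨j, hj⟩).2]
      simp⟩
  left_inv := fun π => by
    apply Subtype.ext; apply Equiv.ext; intro i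
    by_cases hi : i ∈ T
    · exact wmGlue_pos T A _ _ hi
    · exact wmGlue_neg T A _ _ hi
  right_inv := fun στ => by
    refine Prod.ext ?_ ?_ <;> apply Equiv.ext <;> rintro ⟨i, hi⟩ <;> apply Subtype.ext
    · exact wmGlue_pos T A _ _ hi
    · exact wmGlue_neg T A _ _ hi

lemma wm_fiber_card {m : ℕ} (T A : Finset (Fin N)) (hT : T.card = m) (hA : A.card = m) :
    (univ.filter fun π : Equiv.Perm (Fin N) => T.image π = A).card
      = m.factorial * (N - m).factorial := by
  classical
  have h1 : Fintype.card {i : Fin N // i ∈ T} = m := by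
    simpa [Fintype.card_coe] using hT
  have h1' : Fintype.card {i : Fin N // i ∈ A} = m := by
    simpa [Fintype.card_coe] using hA
  have h2 : Fintype.card {i : Fin N // ¬ i ∈ T} = N - m := by
    rw [Fintype.card_subtype_compl, h1, Fintype.card_fin]
  have h2' : Fintype.card {i : Fin N // ¬ i ∈ A} = N - m := by
    rw [Fintype.card_subtype_compl, h1', Fintype.card_fin]
  rw [← Fintype.card_subtype]
  rw [Fintype.card_congr (wmFiberEquiv T A), Fintype.card_prod]
  rw [Fintype.card_equiv (Fintype.equivOfCardEq (h1.trans h1'.symm)),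
      Fintype.card_equiv (Fintype.equivOfCardEq (h2.trans h2'.symm)), h1, h2]

lemma wm_powerset_count {m l : ℕ} (S : Finset (Fin N)) (hS : S.card = m)
    (hl : l ≤ m) :
    ((powersetCard m (univ : Finset (Fin N))).filter fun A => (A \ S).card = l).card
      = m.choose l * (N - m).choose l := by
  classical
  have hSc : Sᶜ.card = N - m := by
    rw [Finset.card_compl, Fintype.card_fin, hS]
  have key : ((powersetCard m (univ : Finset (Fin N))).filter fun A => (A \ S).card = l).card
      = ((powersetCard (m - l) S) ×ˢ (powersetCard l Sᶜ)).card := by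
    refine Finset.card_bij' (fun A _ => (A ∩ S, A \ S)) (fun P _ => P.1 ∪ P.2) ?_ ?_ ?_ ?_
    · intro A hA
      rw [Finset.mem_filter, Finset.mem_powersetCard_univ] at hA
      obtain ⟨hAm, hAl⟩ := hA
      have h0 := Finset.card_inter_add_card_sdiff A S
      exact Finset.mem_product.mpr
        ⟨Finset.mem_powersetCard.mpr ⟨Finset.inter_subset_right,
            by show (A ∩ S).card = m - l; omega⟩,
         Finset.mem_powersetCard.mpr
           ⟨fun x hx => Finset.mem_compl.mpr (Finset.mem_sdiff.mp hx).2, hAl⟩⟩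
    · intro P hP
      rw [Finset.mem_product, Finset.mem_powersetCard, Finset.mem_powersetCard] at hP
      obtain ⟨⟨hP1, hP1c⟩, hP2, hP2c⟩ := hP
      have hdisj : Disjoint P.1 P.2 := by
        rw [Finset.disjoint_left]
        intro x hx1 hx2
        exact (Finset.mem_compl.mp (hP2 hx2)) (hP1 hx1)
      have hsd : (P.1 ∪ P.2) \ S = P.2 := by
        ext x
        simp only [Finset.mem_sdiff, Finset.mem_union]
        constructor
        · rintro ⟨h1 | h2, hns⟩
          · exact absurd (hP1 h1) hns
          · exact h2
        · intro h
          exact ⟨Or.inr h, Finset.mem_compl.mp (hP2 h)⟩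
      rw [Finset.mem_filter, Finset.mem_powersetCard_univ]
      constructor
      · rw [Finset.card_union_of_disjoint hdisj, hP1c, hP2c]; omega
      · rw [hsd, hP2c]
    · intro A hA
      dsimp only
      ext x
      simp only [Finset.mem_union, Finset.mem_inter, Finset.mem_sdiff]
      tauto
    · intro P hP
      rw [Finset.mem_product, Finset.mem_powersetCard, Finset.mem_powersetCard] at hP
      obtain ⟨⟨hP1, _⟩, hP2, _⟩ := hP
      have h1 : (P.1 ∪ P.2) ∩ S = P.1 := by
        ext x
        simp only [Finset.mem_inter, Finset.mem_union]
        constructor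
        · rintro ⟨h1 | h2, hs⟩
          · exact h1
          · exact absurd hs (Finset.mem_compl.mp (hP2 h2))
        · intro h; exact ⟨Or.inl h, hP1 h⟩
      have h2 : (P.1 ∪ P.2) \ S = P.2 := by
        ext x
        simp only [Finset.mem_sdiff, Finset.mem_union]
        constructor
        · rintro ⟨h1 | h2, hns⟩
          · exact absurd (hP1 h1) hns
          · exact h2
        · intro h
          exact ⟨Or.inr h, Finset.mem_compl.mp (hP2 h)⟩
      exact Prod.ext h1 h2
  rw [key, Finset.card_product, Finset.card_powersetCard, Finset.card_powersetCard,
    hS, hSc, Nat.choose_symm hl]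

lemma wm_prod_ite {m : ℕ} (S T : Finset (Fin N)) (hS : S.card = m) (hT : T.card = m)
    (p p' w w' : ℂ) (π : Equiv.Perm (Fin N)) :
    (∏ i, (if i ∈ T then (if π i ∈ S then p else w) else (if π i ∈ S then w' else p')))
      = (w * w') ^ ((T.image π \ S).card) * p ^ (m - (T.image π \ S).card)
          * p' ^ (N - m - (T.image π \ S).card) := by
  classical
  set A := T.image π with hAdef
  set l := (A \ S).card with hldef
  have hAcard : A.card = m := by
    rw [hAdef, Finset.card_image_of_injective _ π.injective, hT]
  have hsymm : ∀ j : Fin N, j ∈ A ↔ π.symm j ∈ T := by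
    intro j
    rw [hAdef]
    simp only [Finset.mem_image]
    constructor
    · rintro ⟨i, hi, rfl⟩; simpa using hi
    · intro h; exact ⟨π.symm j, h, by simp⟩
  have e1 : ((univ.filter fun i => i ∈ T ∧ π i ∈ S).image π) = A ∩ S := by
    ext j
    simp only [Finset.mem_image, Finset.mem_filter, Finset.mem_univ, true_and,
      Finset.mem_inter, hsymm]
    constructor
    · rintro ⟨i, ⟨h1, h2⟩, rfl⟩
      exact ⟨by simpa using h1, h2⟩
    · rintro ⟨h1, h2⟩
      exact ⟨π.symm j, ⟨h1, by simpa using h2⟩, by simp⟩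
  have e2 : ((univ.filter fun i => i ∈ T ∧ ¬ π i ∈ S).image π) = A \ S := by
    ext j
    simp only [Finset.mem_image, Finset.mem_filter, Finset.mem_univ, true_and,
      Finset.mem_sdiff, hsymm]
    constructor
    · rintro ⟨i, ⟨h1, h2⟩, rfl⟩
      exact ⟨by simpa using h1, h2⟩
    · rintro ⟨h1, h2⟩
      exact ⟨π.symm j, ⟨h1, by simpa using h2⟩, by simp⟩
  have e3 : ((univ.filter fun i => ¬ i ∈ T ∧ π i ∈ S).image π) = S \ A := by
    ext j
    simp only [Finset.mem_image, Finset.mem_filter, Finset.mem_univ, true_and,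
      Finset.mem_sdiff, hsymm]
    constructor
    · rintro ⟨i, ⟨h1, h2⟩, rfl⟩
      exact ⟨h2, by simpa using h1⟩
    · rintro ⟨h1, h2⟩
      exact ⟨π.symm j, ⟨by simpa using h2, by simpa using h1⟩, by simp⟩
  have e4 : ((univ.filter fun i => ¬ i ∈ T ∧ ¬ π i ∈ S).image π) = (A ∪ S)ᶜ := by
    ext j
    simp only [Finset.mem_image, Finset.mem_filter, Finset.mem_univ, true_and,
      Finset.mem_compl, Finset.mem_union, hsymm]
    constructor
    · rintro ⟨i, ⟨h1, h2⟩, rfl⟩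
      push_neg
      exact ⟨by simpa using h1, h2⟩
    · intro h
      push_neg at h
      exact ⟨π.symm j, ⟨by simpa using h.1, by simpa using h.2⟩, by simp⟩
  have c1 : (univ.filter fun i => i ∈ T ∧ π i ∈ S).card = (A ∩ S).card := by
    rw [← e1, Finset.card_image_of_injective _ π.injective]
  have c2 : (univ.filter fun i => i ∈ T ∧ ¬ π i ∈ S).card = l := by
    rw [hldef, ← e2, Finset.card_image_of_injective _ π.injective]
  have c3 : (univ.filter fun i => ¬ i ∈ T ∧ π i ∈ S).card = (S \ A).card := by
    rw [← e3, Finset.card_image_of_injective _ π.injective]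
  have c4 : (univ.filter fun i => ¬ i ∈ T ∧ ¬ π i ∈ S).card = ((A ∪ S)ᶜ).card := by
    rw [← e4, Finset.card_image_of_injective _ π.injective]
  have a1 : (A ∩ S).card + (A \ S).card = A.card := Finset.card_inter_add_card_sdiff A S
  have a2 : (S ∩ A).card + (S \ A).card = S.card := Finset.card_inter_add_card_sdiff S A
  have a3 : (A ∪ S).card + (A ∩ S).card = A.card + S.card := Finset.card_union_add_card_inter A S
  have a4 : ((A ∪ S)ᶜ).card = N - (A ∪ S).card := by
    rw [Finset.card_compl, Fintype.card_fin]
  have a5 : (S ∩ A).card = (A ∩ S).card := by rw [Finset.inter_comm]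
  have hun : (A ∪ S).card ≤ N := by
    have := Finset.card_le_univ (A ∪ S)
    simpa [Fintype.card_fin] using this
  have n1 : (A ∩ S).card = m - l := by omega
  have n3 : (S \ A).card = l := by omega
  have n4 : ((A ∪ S)ᶜ).card = N - m - l := by omega
  rw [Finset.prod_ite, Finset.prod_ite, Finset.prod_ite,
    Finset.prod_const, Finset.prod_const, Finset.prod_const, Finset.prod_const,
    Finset.filter_filter, Finset.filter_filter, Finset.filter_filter, Finset.filter_filter]
  rw [c1, c2, c3, c4, n1, n3, n4]
  ring

lemma wm_perm_sum {m : ℕ} (S T : Finset (Fin N)) (hS : S.card = m) (hT : T.card = m)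
    (p p' w w' : ℂ) :
    ∑ π : Equiv.Perm (Fin N), ∏ i, (if i ∈ T then (if π i ∈ S then p else w)
        else (if π i ∈ S then w' else p'))
    = ∑ l ∈ Finset.range (min m (N - m) + 1),
        ((m.factorial * (N - m).factorial * (m.choose l * (N - m).choose l) : ℕ) : ℂ)
          * ((w * w') ^ l * p ^ (m - l) * p' ^ (N - m - l)) := by
  classical
  have hmap : ∀ π ∈ (univ : Finset (Equiv.Perm (Fin N))),
      T.image π ∈ powersetCard m (univ : Finset (Fin N)) := by
    intro π _
    rw [Finset.mem_powersetCard_univ, Finset.card_image_of_injective _ π.injective, hT]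
  rw [← Finset.sum_fiberwise_of_maps_to hmap]
  have step1 : ∀ A ∈ powersetCard m (univ : Finset (Fin N)),
      (∑ π ∈ univ.filter fun π : Equiv.Perm (Fin N) => T.image π = A,
        ∏ i, (if i ∈ T then (if π i ∈ S then p else w) else (if π i ∈ S then w' else p')))
      = ((m.factorial * (N - m).factorial : ℕ) : ℂ) *
          ((w * w') ^ ((A \ S).card) * p ^ (m - (A \ S).card)
            * p' ^ (N - m - (A \ S).card)) := by
    intro A hA
    rw [Finset.mem_powersetCard_univ] at hA
    rw [Finset.sum_congr rfl (fun π hπ => by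
      rw [wm_prod_ite S T hS hT p p' w w' π, (Finset.mem_filter.mp hπ).2])]
    rw [Finset.sum_const, wm_fiber_card T A hT hA, nsmul_eq_mul]
  rw [Finset.sum_congr rfl step1]
  have hmap2 : ∀ A ∈ powersetCard m (univ : Finset (Fin N)),
      (A \ S).card ∈ Finset.range (min m (N - m) + 1) := by
    intro A hA
    rw [Finset.mem_powersetCard_univ] at hA
    rw [Finset.mem_range, Nat.lt_succ_iff, le_min_iff]
    constructor
    · calc (A \ S).card ≤ A.card := Finset.card_le_card (Finset.sdiff_subset)
        _ = m := hA
    · have hsub : A \ S ⊆ Sᶜ := fun x hx => Finset.mem_compl.mpr (Finset.mem_sdiff.mp hx).2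
      calc (A \ S).card ≤ Sᶜ.card := Finset.card_le_card hsub
        _ = N - m := by rw [Finset.card_compl, Fintype.card_fin, hS]
  rw [← Finset.sum_fiberwise_of_maps_to hmap2]
  refine Finset.sum_congr rfl fun l hl => ?_
  rw [Finset.mem_range, Nat.lt_succ_iff, le_min_iff] at hl
  rw [Finset.sum_congr rfl (fun A hA => by rw [(Finset.mem_filter.mp hA).2]),
    Finset.sum_const, wm_powerset_count S hS hl.1, nsmul_eq_mul]
  push_cast
  ring

lemma wm_card_filter (P : ℕ → Prop) [DecidablePred P] :
    (univ.filter fun i : Fin N => P i.val).card = ((Finset.range N).filter P).card := by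
  rw [← Finset.card_image_of_injective _ Fin.val_injective]
  congr 1
  ext j
  simp only [Finset.mem_image, Finset.mem_filter, Finset.mem_univ, true_and, Finset.mem_range]
  constructor
  · rintro ⟨i, hP, rfl⟩; exact ⟨i.isLt, hP⟩
  · rintro ⟨hj, hP⟩; exact ⟨⟨j, hj⟩, hP, rfl⟩

lemma wm_sum_mul_braket {d : ℕ} (ρ : Matrix (Fin d) (Fin d) ℂ) (vv uu : Fin d → ℂ) :
    ∑ t, uu t * ∑ s, (starRingEnd ℂ) (vv s) * ρ s t = braket ρ vv uu := by
  rw [braket]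
  simp_rw [Finset.mul_sum]
  rw [Finset.sum_comm]
  exact Finset.sum_congr rfl fun s _ => Finset.sum_congr rfl fun t _ => by ring

lemma wm_trace_formula {d : ℕ} (ρ : Matrix (Fin d) (Fin d) ℂ)
    (u v : Fin N → Fin d → ℂ) (π : Equiv.Perm (Fin N)) :
    (tpowFam (fun i => rank1 (u i) (v i)) * tpow ρ N * permMat (Fin d) N π).trace
      = ∏ i, braket ρ (v i) (u (π⁻¹ i)) := by
  set M := tpowFam (fun i => rank1 (u i) (v i)) * tpow ρ N with hMdef
  have hM : ∀ x z : Fin N → Fin d,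
      M x z = ∏ i, ∑ s, u i (x i) * (starRingEnd ℂ) (v i s) * ρ s (z i) := by
    intro x z
    rw [hMdef, Matrix.mul_apply]
    rw [Finset.prod_univ_sum (fun _ : Fin N => (univ : Finset (Fin d)))
      (fun i s => u i (x i) * (starRingEnd ℂ) (v i s) * ρ s (z i))]
    rw [Fintype.piFinset_univ]
    refine Finset.sum_congr rfl fun y _ => ?_
    simp only [tpowFam, tpow, rank1]
    rw [← Finset.prod_mul_distrib]
  have tr : (M * permMat (Fin d) N π).trace = ∑ z : Fin N → Fin d, M (fun i => z (π i)) z := by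
    simp only [Matrix.trace, Matrix.diag, Matrix.mul_apply, permMat, mul_ite, mul_one, mul_zero]
    rw [Finset.sum_comm]
    refine Finset.sum_congr rfl fun z _ => ?_
    rw [Finset.sum_ite_eq]
    simp
  calc (M * permMat (Fin d) N π).trace
      = ∑ z : Fin N → Fin d, M (fun i => z (π i)) z := tr
    _ = ∑ z : Fin N → Fin d, ∏ i, (u (π⁻¹ i) (z i) * ∑ s, (starRingEnd ℂ) (v i s) * ρ s (z i)) := by
        refine Finset.sum_congr rfl fun z _ => ?_
        rw [hM]
        calc ∏ i, ∑ s, u i (z (π i)) * (starRingEnd ℂ) (v i s) * ρ s (z i)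
            = ∏ i, (u i (z (π i)) * ∑ s, (starRingEnd ℂ) (v i s) * ρ s (z i)) := by
              refine Finset.prod_congr rfl fun i _ => ?_
              rw [Finset.mul_sum]
              exact Finset.sum_congr rfl fun s _ => by ring
          _ = (∏ i, u i (z (π i))) * ∏ i, (∑ s, (starRingEnd ℂ) (v i s) * ρ s (z i)) :=
              Finset.prod_mul_distrib
          _ = (∏ i, u (π⁻¹ i) (z i)) * ∏ i, (∑ s, (starRingEnd ℂ) (v i s) * ρ s (z i)) := by
              congr 1
              have h := Equiv.prod_comp π (fun j => u (π⁻¹ j) (z j))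
              simpa using h
          _ = ∏ i, (u (π⁻¹ i) (z i) * ∑ s, (starRingEnd ℂ) (v i s) * ρ s (z i)) :=
              Finset.prod_mul_distrib.symm
    _ = ∏ i, ∑ t, (u (π⁻¹ i) t * ∑ s, (starRingEnd ℂ) (v i s) * ρ s t) := by
        rw [Finset.prod_univ_sum (fun _ : Fin N => (univ : Finset (Fin d)))
          (fun i t => u (π⁻¹ i) t * ∑ s, (starRingEnd ℂ) (v i s) * ρ s t), Fintype.piFinset_univ]
    _ = ∏ i, braket ρ (v i) (u (π⁻¹ i)) :=
        Finset.prod_congr rfl fun i _ => wm_sum_mul_braket ρ (v i) (u (π⁻¹ i))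

lemma wm_braket_conj {d : ℕ} {ρ : Matrix (Fin d) (Fin d) ℂ} (hρ : ρ.IsHermitian)
    (x x' : Fin d → ℂ) :
    braket ρ x' x = (starRingEnd ℂ) (braket ρ x x') := by
  rw [braket, braket, map_sum, Finset.sum_comm]
  refine Finset.sum_congr rfl fun i _ => ?_
  rw [map_sum]
  refine Finset.sum_congr rfl fun j _ => ?_
  rw [_root_.map_mul, _root_.map_mul, Complex.conj_conj,
    show (starRingEnd ℂ) (ρ i j) = ρ j i from hρ.apply j i]
  ring

end WishartAux

/-- Wishart moment identity. For orthonormal `x, x'` and a density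
matrix `ρ`, the permutation-summed tensor trace equals the diagonal moments of the
complex central 2×2 Wishart distribution. -/
theorem wishart_moment_identity
    {d : ℕ} (ρ : Matrix (Fin d) (Fin d) ℂ) (hρ : ρ.PosSemidef) (hρt : ρ.trace = 1)
    (x x' : Fin d → ℂ)
    (hx : ∑ i, Complex.normSq (x i) = 1) (hx' : ∑ i, Complex.normSq (x' i) = 1)
    (hxo : ∑ i, (starRingEnd ℂ) (x i) * x' i = 0)
    (a b c : ℕ) (hN : 1 ≤ 2 * a + b + c) :
    ∑ π : Equiv.Perm (Fin (2 * a + b + c)),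
      (tpowFam (fun i : Fin (2 * a + b + c) =>
          if (i : ℕ) < a then rank1 x x'
          else if (i : ℕ) < 2 * a then rank1 x' x
          else if (i : ℕ) < 2 * a + b then rank1 x x
          else rank1 x' x')
        * tpow ρ (2 * a + b + c) * permMat (Fin d) (2 * a + b + c) π).trace
    = (((b + a).factorial : ℂ) * ((c + a).factorial : ℂ)) *
        ∑ l ∈ Finset.range (min (b + a) (c + a) + 1),
          (((b + a).choose l : ℂ) * ((c + a).choose l : ℂ)) *
            ((Complex.normSq (braket ρ x x') : ℝ) : ℂ) ^ l *
            (braket ρ x x) ^ (b + a - l) * (braket ρ x' x') ^ (c + a - l) := by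
  classical
  set u : Fin (2 * a + b + c) → Fin d → ℂ := fun i =>
    if (i : ℕ) < a then x else if (i : ℕ) < 2 * a then x'
    else if (i : ℕ) < 2 * a + b then x else x' with hu
  set v : Fin (2 * a + b + c) → Fin d → ℂ := fun i =>
    if (i : ℕ) < a then x' else if (i : ℕ) < 2 * a then x
    else if (i : ℕ) < 2 * a + b then x else x' with hv
  have hfam : (fun i : Fin (2 * a + b + c) =>
      if (i : ℕ) < a then rank1 x x'
      else if (i : ℕ) < 2 * a then rank1 x' x
      else if (i : ℕ) < 2 * a + b then rank1 x x
      else rank1 x' x')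
      = fun i => rank1 (u i) (v i) := by
    funext i
    simp only [hu, hv]
    split_ifs <;> rfl
  rw [hfam]
  simp only [wm_trace_formula ρ u v]
  set S : Finset (Fin (2 * a + b + c)) :=
    univ.filter (fun j => (j : ℕ) < a ∨ (2 * a ≤ (j : ℕ) ∧ (j : ℕ) < 2 * a + b)) with hSdef
  set T : Finset (Fin (2 * a + b + c)) :=
    univ.filter (fun j => a ≤ (j : ℕ) ∧ (j : ℕ) < 2 * a + b) with hTdef
  have hScard : S.card = b + a := by
    rw [hSdef, wm_card_filter (fun n => n < a ∨ (2 * a ≤ n ∧ n < 2 * a + b))]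
    have heq : (Finset.range (2 * a + b + c)).filter
        (fun i => i < a ∨ (2 * a ≤ i ∧ i < 2 * a + b))
        = Finset.range a ∪ Finset.Ico (2 * a) (2 * a + b) := by
      ext j
      simp only [Finset.mem_filter, Finset.mem_range, Finset.mem_union, Finset.mem_Ico]
      omega
    rw [heq, Finset.card_union_of_disjoint (by
      rw [Finset.disjoint_left]
      intro j hj1 hj2
      simp only [Finset.mem_range] at hj1
      simp only [Finset.mem_Ico] at hj2
      omega)]
    rw [Finset.card_range, Nat.card_Ico]
    omega
  have hTcard : T.card = b + a := by
    rw [hTdef, wm_card_filter (fun n => a ≤ n ∧ n < 2 * a + b)]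
    have heq : (Finset.range (2 * a + b + c)).filter (fun i => a ≤ i ∧ i < 2 * a + b)
        = Finset.Ico a (2 * a + b) := by
      ext j
      simp only [Finset.mem_filter, Finset.mem_range, Finset.mem_Ico]
      omega
    rw [heq, Nat.card_Ico]
    omega
  have hub : ∀ j, u j = if j ∈ S then x else x' := by
    intro j
    simp only [hu, hSdef, Finset.mem_filter, Finset.mem_univ, true_and]
    split_ifs <;> first | rfl | (exfalso; omega)
  have hvb : ∀ j, v j = if j ∈ T then x else x' := by
    intro j
    simp only [hv, hTdef, Finset.mem_filter, Finset.mem_univ, true_and]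
    split_ifs <;> first | rfl | (exfalso; omega)
  have hval : ∀ i j : Fin (2 * a + b + c), braket ρ (v i) (u j)
      = if i ∈ T then (if j ∈ S then braket ρ x x else braket ρ x x')
        else (if j ∈ S then braket ρ x' x else braket ρ x' x') := by
    intro i j
    rw [hub j, hvb i]
    by_cases hi : i ∈ T <;> by_cases hj : j ∈ S <;> simp [hi, hj]
  simp only [hval]
  have hre : (∑ π : Equiv.Perm (Fin (2 * a + b + c)), ∏ i,
        (if i ∈ T then (if π⁻¹ i ∈ S then braket ρ x x else braket ρ x x')
          else (if π⁻¹ i ∈ S then braket ρ x' x else braket ρ x' x')))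
      = ∑ π : Equiv.Perm (Fin (2 * a + b + c)), ∏ i,
        (if i ∈ T then (if π i ∈ S then braket ρ x x else braket ρ x x')
          else (if π i ∈ S then braket ρ x' x else braket ρ x' x')) :=
    Fintype.sum_equiv (Equiv.inv (Equiv.Perm (Fin (2 * a + b + c)))) _ _ (fun π => rfl)
  rw [hre]
  rw [wm_perm_sum S T hScard hTcard (braket ρ x x) (braket ρ x' x')
    (braket ρ x x') (braket ρ x' x)]
  rw [show 2 * a + b + c - (b + a) = c + a from by omega]
  have hww : braket ρ x x' * braket ρ x' x
      = ((Complex.normSq (braket ρ x x') : ℝ) : ℂ) := by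
    rw [wm_braket_conj hρ.1 x x', Complex.mul_conj]
  rw [Finset.mul_sum]
  refine Finset.sum_congr rfl fun l hl => ?_
  rw [hww]
  push_cast
  ring
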